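/- (Matching lower bound for nearest-neighbor moments.) Suppose each X_i has marginal law μ and μ(B(x,r)) ≤ c_+ r^s for all 0 < r ≤ r_0. Let r^- = (k/(2 c_+ n))^{1/s} and assume r^- ≤ r_0. Then P(R_{n,k}(x) > r^-) ≥ 1/2, and consequently for every p > 0, E[R_{n,k}(x)^p] ≥ (1/2) (k/(2 c_+ n))^{p/s}. -/

import Mathlib

open Metric MeasureTheory
open scoped ENNReal

/-- The `k`-th nearest-neighbor radius of the query point `x`. -/
noncomputable def kNNdist {d n : ℕ} (x : EuclideanSpace ℝ (Fin d))
    (X : Fin n → EuclideanSpace ℝ (Fin d)) (k : ℕ) : ℝ :=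
  sInf {r : ℝ | k ≤ (Finset.univ.filter fun i => dist (X i) x ≤ r).card}

/-- If fewer than `k` points lie within distance `r` of `x`, then the `k`-th
nearest-neighbor distance is strictly larger than `r`. -/
lemma kNN_lt_of_card_lt {d n : ℕ} (x : EuclideanSpace ℝ (Fin d))
    (Y : Fin n → EuclideanSpace ℝ (Fin d))
    (k : ℕ) (hk1 : 1 ≤ k) (hkn : k ≤ n) (r : ℝ)
    (h : (Finset.univ.filter fun i => dist (Y i) x ≤ r).card < k) :
    r < kNNdist x Y k := by
  have hn : 0 < n := lt_of_lt_of_le hk1 hkn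
  haveI : NeZero n := ⟨hn.ne'⟩
  have hne : (Finset.univ : Finset (Fin n)).Nonempty := Finset.univ_nonempty
  set T := Finset.univ.filter (fun i => r < dist (Y i) x) with hTdef
  have hT : T.Nonempty := by
    by_contra hc
    rw [Finset.not_nonempty_iff_eq_empty, Finset.filter_eq_empty_iff] at hc
    have : (Finset.univ.filter fun i => dist (Y i) x ≤ r) = Finset.univ := by
      apply Finset.filter_true_of_mem
      intro i hi
      exact le_of_not_gt (hc hi)
    rw [this, Finset.card_univ, Fintype.card_fin] at h
    omega
  set m := T.inf' hT (fun i => dist (Y i) x) with hmdef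
  have hrm : r < m := by
    rw [hmdef, Finset.lt_inf'_iff]
    intro i hi
    exact (Finset.mem_filter.1 hi).2
  set M := Finset.univ.sup' hne (fun i => dist (Y i) x) with hMdef
  have hMS : k ≤ (Finset.univ.filter fun i => dist (Y i) x ≤ M).card := by
    have : (Finset.univ.filter fun i => dist (Y i) x ≤ M) = Finset.univ := by
      apply Finset.filter_true_of_mem
      intro i hi
      exact Finset.le_sup' (fun i => dist (Y i) x) hi
    rw [this, Finset.card_univ, Fintype.card_fin]; exact hkn
  have hle : m ≤ kNNdist x Y k := by
    apply le_csInf ⟨M, hMS⟩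
    intro b hb
    simp only [Set.mem_setOf_eq] at hb
    have hnsub : ¬ (Finset.univ.filter fun i => dist (Y i) x ≤ b) ⊆
        (Finset.univ.filter fun i => dist (Y i) x ≤ r) := by
      intro hsub
      exact absurd (Finset.card_le_card hsub) (by omega)
    obtain ⟨i, hib, hir⟩ := Finset.not_subset.1 hnsub
    have h1 : dist (Y i) x ≤ b := (Finset.mem_filter.1 hib).2
    have h2 : r < dist (Y i) x := by
      by_contra hc
      exact hir (Finset.mem_filter.2 ⟨Finset.mem_univ i, le_of_not_gt hc⟩)
    have hiT : i ∈ T := Finset.mem_filter.2 ⟨Finset.mem_univ i, h2⟩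
    exact le_trans (Finset.inf'_le _ hiT) h1
  linarith

/-- matching lower bound for nearest-neighbor moments:
under the local upper-mass condition `μ(B(x,r)) ≤ c₊ rˢ` for `0 < r ≤ r₀`, with
`r⁻ = (k/(2c₊n))^{1/s} ≤ r₀`, we have `P(R_{n,k}(x) > r⁻) ≥ 1/2`, and for every
`p > 0`, `E[R_{n,k}(x)^p] ≥ (1/2) (k/(2c₊n))^{p/s}`. -/
theorem stmt3 {d n : ℕ} {Ω : Type*} [MeasurableSpace Ω]
    (P : Measure Ω) [IsProbabilityMeasure P]
    (X : Fin n → Ω → EuclideanSpace ℝ (Fin d)) (hXm : ∀ i, Measurable (X i))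
    (μ : Measure (EuclideanSpace ℝ (Fin d))) (hlaw : ∀ i, P.map (X i) = μ)
    (x : EuclideanSpace ℝ (Fin d)) (cp r0 s : ℝ)
    (hcp : 0 < cp) (hr0 : 0 < r0) (hs : 0 < s)
    (hmass : ∀ r : ℝ, 0 < r → r ≤ r0 →
      μ (closedBall x r) ≤ ENNReal.ofReal (cp * r ^ s))
    (k : ℕ) (hk1 : 1 ≤ k) (hkn : k ≤ n)
    (hrange : ((k : ℝ) / (2 * cp * n)) ^ ((1 : ℝ) / s) ≤ r0) :
    (1 / 2 : ℝ≥0∞) ≤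
      P {ω | ((k : ℝ) / (2 * cp * n)) ^ ((1 : ℝ) / s) < kNNdist x (fun i => X i ω) k} ∧
    ∀ p : ℝ, 0 < p →
      ENNReal.ofReal ((1 / 2) * ((k : ℝ) / (2 * cp * n)) ^ (p / s)) ≤
        ∫⁻ ω, ENNReal.ofReal (kNNdist x (fun i => X i ω) k ^ p) ∂P := by
  have hn : 0 < n := lt_of_lt_of_le hk1 hkn
  set A : ℝ := (k : ℝ) / (2 * cp * n) with hAdef
  have hA : 0 < A := by
    apply div_pos (by exact_mod_cast hk1)
    positivity
  set rm : ℝ := A ^ ((1:ℝ)/s) with hrmdef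
  have hrm : 0 < rm := Real.rpow_pos_of_pos hA _
  -- the law of each distance event
  have hball : ∀ i, P {ω | dist (X i ω) x ≤ rm} = μ (closedBall x rm) := by
    intro i
    rw [← hlaw i, Measure.map_apply (hXm i) measurableSet_closedBall]
    rfl
  have hrms : rm ^ s = A := by
    rw [hrmdef, ← Real.rpow_mul hA.le, one_div_mul_cancel hs.ne', Real.rpow_one]
  have hmass' : μ (closedBall x rm) ≤ ENNReal.ofReal ((k:ℝ) / (2*n)) := by
    have h1 := hmass rm hrm hrange
    have h2 : cp * rm ^ s = (k:ℝ) / (2*n) := by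
      rw [hrms, hAdef]
      field_simp
    rwa [h2] at h1
  -- the bad set: at least k sample points within distance rm of x
  set Bad : Set Ω := {ω | (k:ℝ≥0∞) ≤ ∑ i : Fin n, if dist (X i ω) x ≤ rm then (1:ℝ≥0∞) else 0}
    with hBdef
  have hSi : ∀ i, MeasurableSet {ω | dist (X i ω) x ≤ rm} := fun i =>
    (hXm i) measurableSet_closedBall
  have hgm : Measurable (fun ω => ∑ i : Fin n, if dist (X i ω) x ≤ rm then (1:ℝ≥0∞) else 0) := by
    apply Finset.measurable_sum
    intro i _
    exact Measurable.ite (hSi i) measurable_const measurable_const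
  have hBadm : MeasurableSet Bad := hgm measurableSet_Ici
  have hint : ∫⁻ ω, (∑ i : Fin n, if dist (X i ω) x ≤ rm then (1:ℝ≥0∞) else 0) ∂P
      ≤ ENNReal.ofReal ((k:ℝ)/2) := by
    rw [lintegral_finset_sum _
      (fun i _ => Measurable.ite (hSi i) measurable_const measurable_const)]
    have heach : ∀ i : Fin n, ∫⁻ ω, (if dist (X i ω) x ≤ rm then (1:ℝ≥0∞) else 0) ∂P
        = P {ω | dist (X i ω) x ≤ rm} := by
      intro i
      rw [show (∫⁻ ω, (if dist (X i ω) x ≤ rm then (1:ℝ≥0∞) else 0) ∂P)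
          = ∫⁻ ω, Set.indicator {ω | dist (X i ω) x ≤ rm} 1 ω ∂P from
        lintegral_congr fun ω => by simp [Set.indicator_apply]]
      exact lintegral_indicator_one (hSi i)
    calc ∑ i : Fin n, ∫⁻ ω, (if dist (X i ω) x ≤ rm then (1:ℝ≥0∞) else 0) ∂P
        = ∑ _i : Fin n, μ (closedBall x rm) :=
          Finset.sum_congr rfl fun i _ => (heach i).trans (hball i)
      _ = (n : ℝ≥0∞) * μ (closedBall x rm) := by
          rw [Finset.sum_const, Finset.card_univ, Fintype.card_fin, nsmul_eq_mul]
      _ ≤ (n : ℝ≥0∞) * ENNReal.ofReal ((k:ℝ)/(2*n)) := mul_le_mul_right hmass' _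
      _ = ENNReal.ofReal ((k:ℝ)/2) := by
          rw [← ENNReal.ofReal_natCast n, ← ENNReal.ofReal_mul (by positivity)]
          congr 1
          field_simp
  -- Markov: P(Bad) ≤ 1/2
  have hBadle : P Bad ≤ 1/2 := by
    have hmar := mul_meas_ge_le_lintegral₀ (μ := P) hgm.aemeasurable (k : ℝ≥0∞)
    have hk0 : (k : ℝ≥0∞) ≠ 0 := by
      simp only [ne_eq, Nat.cast_eq_zero]; omega
    have hktop : (k : ℝ≥0∞) ≠ ⊤ := ENNReal.natCast_ne_top k
    have hofk : ENNReal.ofReal ((k:ℝ)/2) = (k:ℝ≥0∞) * (1/2) := by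
      rw [ENNReal.ofReal_div_of_pos two_pos, ENNReal.ofReal_natCast, ENNReal.ofReal_ofNat,
        div_eq_mul_inv, one_div]
    have hfinal : (k:ℝ≥0∞) * P Bad ≤ (k:ℝ≥0∞) * (1/2) :=
      le_trans hmar (le_trans hint hofk.le)
    exact (ENNReal.mul_le_mul_iff_right hk0 hktop).1 hfinal
  have hhalf : (1:ℝ≥0∞)/2 ≤ P Badᶜ := by
    rw [measure_compl hBadm (measure_ne_top P _), measure_univ]
    calc (1:ℝ≥0∞)/2 = 1 - 1/2 := (ENNReal.sub_half ENNReal.one_ne_top).symm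
      _ ≤ 1 - P Bad := tsub_le_tsub_left hBadle 1
  -- the complement of Bad is contained in the good event
  have hsub : Badᶜ ⊆ {ω | rm < kNNdist x (fun i => X i ω) k} := by
    intro ω hω
    simp only [hBdef, Set.mem_compl_iff, Set.mem_setOf_eq, not_le] at hω
    have hcard : (∑ i : Fin n, if dist (X i ω) x ≤ rm then (1:ℝ≥0∞) else 0)
        = ((Finset.univ.filter fun i => dist (X i ω) x ≤ rm).card : ℝ≥0∞) := by
      rw [Finset.card_filter]
      push_cast
      rfl
    rw [hcard] at hω
    have hcardlt : (Finset.univ.filter fun i => dist (X i ω) x ≤ rm).card < k := by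
      exact_mod_cast hω
    exact kNN_lt_of_card_lt x (fun i => X i ω) k hk1 hkn rm hcardlt
  constructor
  · exact le_trans hhalf (measure_mono hsub)
  · intro p hp
    have hrmp : rm ^ p = A ^ (p/s) := by
      rw [hrmdef, ← Real.rpow_mul hA.le, div_mul_eq_mul_div, one_mul]
    have hpt : ∀ ω, (Badᶜ.indicator (fun _ => ENNReal.ofReal (rm ^ p)) ω)
        ≤ ENNReal.ofReal (kNNdist x (fun i => X i ω) k ^ p) := by
      intro ω
      by_cases hω : ω ∈ Badᶜ
      · rw [Set.indicator_of_mem hω]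
        exact ENNReal.ofReal_le_ofReal
          (Real.rpow_le_rpow hrm.le (le_of_lt (hsub hω)) hp.le)
      · rw [Set.indicator_of_notMem hω]
        exact zero_le
    calc ENNReal.ofReal ((1/2) * A ^ (p/s))
        = ENNReal.ofReal (rm ^ p) * (1/2) := by
          rw [← hrmp, ENNReal.ofReal_mul (by norm_num), mul_comm]
          congr 1
          rw [ENNReal.ofReal_div_of_pos two_pos, ENNReal.ofReal_one, ENNReal.ofReal_ofNat]
      _ ≤ ENNReal.ofReal (rm ^ p) * P Badᶜ := mul_le_mul_right hhalf _
      _ = ∫⁻ ω, Badᶜ.indicator (fun _ => ENNReal.ofReal (rm ^ p)) ω ∂P := by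
          rw [lintegral_indicator_const hBadm.compl]
      _ ≤ ∫⁻ ω, ENNReal.ofReal (kNNdist x (fun i => X i ω) k ^ p) ∂P := lintegral_mono hpt
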